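/- arXiv:2601.11392 — 2 statements merged into one kernel-verified Lean document; each statement's English description precedes it below -/
import Mathlib

section
/- There is an absolute constant C > 0 such that the following holds. Let f ∈ ℤ[X] have degree 3 and let p be a prime that does not divide all of the coefficients of f. Then for every integer k ≥ 1, #{x ∈ ℤ/p^kℤ : f(x) ≡ 0 (mod p^k)} ≤ C (k+1)^{k−1} gcd(p^k, Disc(f))^{2/3}. -/
open scoped Classical
noncomputable section
namespace CubicAux
open Polynomial

def ev (a b c d x : ℤ) : ℤ := a*x^3 + b*x^2 + c*x + d

def dsc (a b c d : ℤ) : ℤ :=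
  b^2*c^2 - 4*a*c^3 - 4*b^3*d - 27*a^2*d^2 + 18*a*b*c*d

def cntN (p k : ℕ) (a b c d : ℤ) : ℕ :=
  ((Finset.range (p^k)).filter (fun x : ℕ => (p:ℤ)^k ∣ ev a b c d (x:ℤ))).card

lemma ev_sub (a b c d u v : ℤ) :
    ev a b c d u - ev a b c d v
      = (u - v) * (a*(u^2+u*v+v^2) + b*(u+v) + c) := by
  simp only [ev]; ring

lemma ev_shift (a b c d ρ q y : ℤ) :
    ev a b c d (ρ + q*y)
      = q^3*a*y^3 + q^2*(3*a*ρ+b)*y^2 + q*(3*a*ρ^2+2*b*ρ+c)*y + ev a b c d ρ := by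
  simp only [ev]; ring

lemma dsc_shift (a b c d ρ q : ℤ) :
    dsc (q^3*a) (q^2*(3*a*ρ+b)) (q*(3*a*ρ^2+2*b*ρ+c)) (ev a b c d ρ)
      = q^6 * dsc a b c d := by
  simp only [dsc, ev]; ring

lemma gcd_pow_mul (p s j : ℕ) (n : ℕ) :
    Nat.gcd (p^(s+j)) (p^s * n) = p^s * Nat.gcd (p^j) n := by
  rw [pow_add]; exact Nat.gcd_mul_left _ _ _

lemma gcd_pow_le (p s j n : ℕ) (hp : 0 < p) :
    Nat.gcd (p^(s+j)) n ≤ p^s * Nat.gcd (p^j) n := by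
  have hdvd : Nat.gcd (p^(s+j)) n ∣ p^s * Nat.gcd (p^j) n := by
    rw [← gcd_pow_mul]
    exact Nat.dvd_gcd (Nat.gcd_dvd_left _ _)
      ((Nat.gcd_dvd_right _ _).trans (dvd_mul_left n (p^s)))
  exact Nat.le_of_dvd (Nat.mul_pos (Nat.pow_pos hp)
    (Nat.gcd_pos_of_pos_left _ (Nat.pow_pos hp))) hdvd
lemma count_period (u v : ℕ) (hv : 0 < v) (Q : ℕ → Prop) :
    ((Finset.range (u*v)).filter (fun y => Q (y % v))).card
      = u * ((Finset.range v).filter (fun y => Q y)).card := by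
  have key : ((Finset.range (u*v)).filter (fun y => Q (y % v))).card
      = ((Finset.range u) ×ˢ ((Finset.range v).filter (fun y => Q y))).card := by
    apply Finset.card_bij' (fun y _ => (y / v, y % v)) (fun z _ => z.2 + z.1 * v)
    · intro y hy
      simp only [Finset.mem_filter, Finset.mem_range] at hy
      simp only [Finset.mem_product, Finset.mem_range, Finset.mem_filter]
      exact ⟨Nat.div_lt_of_lt_mul (by rw [mul_comm]; exact hy.1),
        ⟨Nat.mod_lt _ hv, hy.2⟩⟩
    · intro z hz
      simp only [Finset.mem_product, Finset.mem_range, Finset.mem_filter] at hz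
      simp only [Finset.mem_filter, Finset.mem_range]
      have hlt : z.2 + z.1 * v < u * v := by
        have : z.2 + z.1 * v < (z.1 + 1) * v := by
          have := hz.2.1; nlinarith
        have h2 : (z.1 + 1) * v ≤ u * v := Nat.mul_le_mul_right _ (by omega)
        omega
      refine ⟨hlt, ?_⟩
      rw [Nat.add_mul_mod_self_right, Nat.mod_eq_of_lt hz.2.1]
      exact hz.2.2
    · intro y hy
      show y % v + y / v * v = y
      have := Nat.mod_add_div' y v
      omega
    · intro z hz
      simp only [Finset.mem_product, Finset.mem_range, Finset.mem_filter] at hz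
      have h2 : z.2 < v := hz.2.1
      have hdiv : (z.2 + z.1 * v) / v = z.1 := by
        rw [Nat.add_mul_div_right _ _ hv, Nat.div_eq_of_lt h2, Nat.zero_add]
      have hmod : (z.2 + z.1 * v) % v = z.2 := by
        rw [Nat.add_mul_mod_self_right, Nat.mod_eq_of_lt h2]
      simp [hdiv, hmod]
  rw [key, Finset.card_product, Finset.card_range]

lemma card_roots_le_three {p : ℕ} (hp : p.Prime) (a b c d : ℤ)
    (hcont : ¬((p:ℤ) ∣ a ∧ (p:ℤ) ∣ b ∧ (p:ℤ) ∣ c ∧ (p:ℤ) ∣ d)) :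
    ((Finset.range p).filter (fun r : ℕ => (p:ℤ) ∣ ev a b c d (r:ℤ))).card ≤ 3 := by
  haveI : Fact p.Prime := ⟨hp⟩
  set q : Polynomial (ZMod p) :=
    C (a : ZMod p) * X^3 + C (b : ZMod p) * X^2 + C (c : ZMod p) * X + C (d : ZMod p) with hq
  have hcoeff3 : q.coeff 3 = (a : ZMod p) := by
    simp only [hq, coeff_add, coeff_C_mul, coeff_X_pow, coeff_C, coeff_X]
    norm_num
  have hcoeff2 : q.coeff 2 = (b : ZMod p) := by
    simp only [hq, coeff_add, coeff_C_mul, coeff_X_pow, coeff_C, coeff_X]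
    norm_num
  have hcoeff1 : q.coeff 1 = (c : ZMod p) := by
    simp only [hq, coeff_add, coeff_C_mul, coeff_X_pow, coeff_C, coeff_X]
    norm_num
  have hcoeff0 : q.coeff 0 = (d : ZMod p) := by
    simp only [hq, coeff_add, coeff_C_mul, coeff_X_pow, coeff_C, coeff_X]
    norm_num
  have hq0 : q ≠ 0 := by
    intro h
    apply hcont
    refine ⟨?_, ?_, ?_, ?_⟩ <;>
      rw [← ZMod.intCast_zmod_eq_zero_iff_dvd]
    · rw [← hcoeff3, h]; simp
    · rw [← hcoeff2, h]; simp
    · rw [← hcoeff1, h]; simp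
    · rw [← hcoeff0, h]; simp
  have hdeg : q.natDegree ≤ 3 := by
    refine natDegree_le_iff_coeff_eq_zero.mpr fun m hm => ?_
    have h1 : ¬ (m = 3) := by omega
    have h2 : ¬ (m = 2) := by omega
    have h3 : ¬ (m = 1) := by omega
    have h4 : ¬ (m = 0) := by omega
    have h1' : ¬ (3 = m) := by omega
    have h2' : ¬ (2 = m) := by omega
    have h3' : ¬ (1 = m) := by omega
    have h4' : ¬ (0 = m) := by omega
    simp only [hq, coeff_add, coeff_C_mul, coeff_X_pow, coeff_C, coeff_X,
      h1, h2, h3, h4, h1', h2', h3', h4', if_false]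
    norm_num
  have hcard : q.roots.toFinset.card ≤ 3 :=
    le_trans (Multiset.toFinset_card_le _) (le_trans (card_roots' q) hdeg)
  refine le_trans (Finset.card_le_card_of_injOn (fun r => ((r:ℕ) : ZMod p)) ?_ ?_) hcard
  · intro r hr
    simp only [Finset.mem_coe, Finset.mem_filter, Finset.mem_range] at hr ⊢
    rw [Multiset.mem_toFinset, mem_roots hq0]
    show q.eval ((r:ℕ) : ZMod p) = 0
    have heq : q.eval ((r:ℕ) : ZMod p) = ((ev a b c d (r:ℤ) : ℤ) : ZMod p) := by
      simp only [hq, ev, eval_add, eval_mul, eval_pow, eval_C, eval_X]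
      push_cast
      ring
    rw [heq, ZMod.intCast_zmod_eq_zero_iff_dvd]
    exact hr.2
  · intro r hr s hs h
    simp only [Finset.mem_coe, Finset.mem_filter, Finset.mem_range] at hr hs
    simp only at h
    have hv1 : ((r:ZMod p)).val = r := ZMod.val_cast_of_lt hr.1
    have hv2 : ((s:ZMod p)).val = s := ZMod.val_cast_of_lt hs.1
    have hv : ((r:ZMod p)).val = ((s:ZMod p)).val := by rw [h]
    omega

lemma dvd_ev_of_mod {p : ℕ} (a b c d : ℤ) (x r : ℕ) (hmod : x % p = r)
    (h : (p:ℤ) ∣ ev a b c d (x:ℤ)) : (p:ℤ) ∣ ev a b c d (r:ℤ) := by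
  have hx : x = p * (x / p) + r := by
    have := Nat.div_add_mod x p; omega
  have hxz : (x:ℤ) - (r:ℤ) = (p:ℤ) * (x / p : ℕ) := by
    rw [sub_eq_iff_eq_add]
    exact_mod_cast congrArg (Nat.cast : ℕ → ℤ) hx
  have hdvd : (p:ℤ) ∣ ev a b c d (x:ℤ) - ev a b c d (r:ℤ) := by
    rw [ev_sub, hxz]
    exact Dvd.dvd.mul_right (Dvd.intro _ rfl) _
  have := dvd_sub h hdvd
  simpa using this

lemma cnt_fiber (p : ℕ) (hp : 0 < p) (k' : ℕ) (a b c d : ℤ) :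
    cntN p (k'+1) a b c d
      = ∑ r ∈ (Finset.range p).filter (fun r : ℕ => (p:ℤ) ∣ ev a b c d (r:ℤ)),
        ((Finset.range (p^k')).filter
          (fun y : ℕ => (p:ℤ)^(k'+1) ∣ ev a b c d ((r:ℤ) + (p:ℤ)*(y:ℤ)))).card := by
  classical
  unfold cntN
  have hmem : ∀ x ∈ (Finset.range (p^(k'+1))).filter
      (fun x : ℕ => (p:ℤ)^(k'+1) ∣ ev a b c d (x:ℤ)), x % p ∈ Finset.range p :=
    fun x _ => Finset.mem_range.mpr (Nat.mod_lt _ hp)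
  rw [Finset.card_eq_sum_card_fiberwise hmem]
  rw [Finset.sum_filter]
  apply Finset.sum_congr rfl
  intro r hr
  have hrp : r < p := Finset.mem_range.mp hr
  by_cases hdvd : (p:ℤ) ∣ ev a b c d (r:ℤ)
  · rw [if_pos hdvd]
    apply Finset.card_bij' (fun x _ => x / p) (fun y _ => r + p * y)
    · intro x hx
      simp only [Finset.mem_filter, Finset.mem_range] at hx ⊢
      obtain ⟨⟨hx1, hx2⟩, hx3⟩ := hx
      have hd : x / p < p ^ k' := by
        apply Nat.div_lt_of_lt_mul
        rw [mul_comm]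
        calc x < p^(k'+1) := hx1
          _ = p^k' * p := by ring
      refine ⟨hd, ?_⟩
      have hxe : (x:ℤ) = (r:ℤ) + (p:ℤ)*((x/p : ℕ):ℤ) := by
        have h : x = p * (x / p) + r := by have := Nat.div_add_mod x p; omega
        have h2 : (x:ℤ) = (p:ℤ) * ((x/p : ℕ):ℤ) + (r:ℤ) := by exact_mod_cast congrArg (Nat.cast : ℕ → ℤ) h
        linarith
      rw [← hxe]; exact hx2
    · intro y hy
      simp only [Finset.mem_filter, Finset.mem_range] at hy ⊢
      obtain ⟨hy1, hy2⟩ := hy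
      have hlt : r + p * y < p ^ (k'+1) := by
        have h1 : r + p * y < p * (y + 1) := by nlinarith
        have h2 : p * (y+1) ≤ p * p^k' := Nat.mul_le_mul_left _ (by omega)
        have h3 : p * p^k' = p^(k'+1) := by ring
        omega
      refine ⟨⟨hlt, ?_⟩, ?_⟩
      · have : ((r + p*y : ℕ) : ℤ) = (r:ℤ) + (p:ℤ)*(y:ℤ) := by push_cast; ring
        rw [this]; exact hy2
      · rw [Nat.add_mul_mod_self_left, Nat.mod_eq_of_lt hrp]
    · intro x hx
      simp only [Finset.mem_filter, Finset.mem_range] at hx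
      have := Nat.div_add_mod x p
      omega
    · intro y hy
      simp only [Finset.mem_filter, Finset.mem_range] at hy
      show (r + p * y) / p = y
      rw [Nat.add_mul_div_left _ _ hp, Nat.div_eq_of_lt hrp, Nat.zero_add]
  · rw [if_neg hdvd]
    rw [Finset.card_eq_zero]
    apply Finset.filter_eq_empty_iff.mpr
    intro x hx
    simp only [Finset.mem_filter, Finset.mem_range] at hx
    intro hmod
    apply hdvd
    apply dvd_ev_of_mod a b c d x r hmod
    exact dvd_trans (dvd_pow_self (p:ℤ) (Nat.succ_ne_zero k')) hx.2

lemma dvd_ev_iff_mod (q : ℕ) (a b c d : ℤ) (y : ℕ) :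
    ((q:ℤ) ∣ ev a b c d (y:ℤ)) ↔ ((q:ℤ) ∣ ev a b c d ((y % q : ℕ):ℤ)) := by
  have hx : y = q * (y / q) + (y % q) := by
    have := Nat.div_add_mod y q; omega
  have hxz : (y:ℤ) - ((y % q : ℕ):ℤ) = (q:ℤ) * ((y / q : ℕ):ℤ) := by
    rw [sub_eq_iff_eq_add]
    exact_mod_cast congrArg (Nat.cast : ℕ → ℤ) hx
  have hdvd : (q:ℤ) ∣ ev a b c d (y:ℤ) - ev a b c d ((y % q : ℕ):ℤ) := by
    rw [ev_sub, hxz]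
    exact Dvd.dvd.mul_right (Dvd.intro _ rfl) _
  constructor
  · intro h; have := dvd_sub h hdvd; simpa using this
  · intro h; have := dvd_add h hdvd; simpa using this

lemma classBound (p : ℕ) (hp : p.Prime) (k' : ℕ) (a b c d : ℤ)
    (hcont : ¬((p:ℤ) ∣ a ∧ (p:ℤ) ∣ b ∧ (p:ℤ) ∣ c ∧ (p:ℤ) ∣ d))
    (r : ℕ) (hr : (p:ℤ) ∣ ev a b c d (r:ℤ))
    (IH : ∀ j, 1 ≤ j → j ≤ k' → ∀ A B C D : ℤ,
      ¬((p:ℤ) ∣ A ∧ (p:ℤ) ∣ B ∧ (p:ℤ) ∣ C ∧ (p:ℤ) ∣ D) →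
      (cntN p j A B C D)^3 ≤ 27^j * (Nat.gcd (p^j) (dsc A B C D).natAbs)^2) :
    (((Finset.range (p^(k'+1))).filter
        (fun y : ℕ => (p:ℤ)^(k'+2) ∣ ev a b c d ((r:ℤ) + (p:ℤ)*(y:ℤ)))).card)^3
      ≤ 27^k' * (Nat.gcd (p^(k'+2)) (dsc a b c d).natAbs)^2 := by
  classical
  have hp0 : 0 < p := hp.pos
  have hpz : (p:ℤ) ≠ 0 := by exact_mod_cast hp0.ne'
  set ρ : ℤ := (r:ℤ) with hρ
  set e₂ : ℤ := 3*a*ρ+b with he₂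
  set e₁ : ℤ := 3*a*ρ^2+2*b*ρ+c with he₁
  set e₀ : ℤ := ev a b c d ρ with he₀
  have hEV : ∀ y : ℤ, ev a b c d (ρ + p*y)
      = (p:ℤ)^3*a*y^3 + (p:ℤ)^2*e₂*y^2 + (p:ℤ)*e₁*y + e₀ := fun y => ev_shift a b c d ρ p y
  set g := Nat.gcd (p^(k'+2)) (dsc a b c d).natAbs with hg
  have hgpos : 0 < g := Nat.gcd_pos_of_pos_left _ (Nat.pow_pos hp0)
  set S := (Finset.range (p^(k'+1))).filter
      (fun y : ℕ => (p:ℤ)^(k'+2) ∣ ev a b c d (ρ + (p:ℤ)*(y:ℤ))) with hS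
  show S.card ^ 3 ≤ 27^k' * g^2
  by_cases hA : (p:ℤ) ∣ e₁
  on_goal 2 =>
    -- simple root: at most one solution
    have hcard : S.card ≤ 1 := by
      apply Finset.card_le_one.mpr
      intro y hy y' hy'
      simp only [hS, Finset.mem_filter, Finset.mem_range] at hy hy'
      set W : ℤ := (p:ℤ)^2*a*((y:ℤ)^2+(y:ℤ)*(y':ℤ)+(y':ℤ)^2)
          + (p:ℤ)*e₂*((y:ℤ)+(y':ℤ)) + e₁ with hW
      have hdiff : ev a b c d (ρ + p*(y:ℤ)) - ev a b c d (ρ + p*(y':ℤ))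
          = (p:ℤ) * (((y:ℤ) - (y':ℤ)) * W) := by
        rw [hEV, hEV, hW]; ring
      have hdvd1 : (p:ℤ)^(k'+2) ∣ (p:ℤ) * (((y:ℤ) - (y':ℤ)) * W) := by
        rw [← hdiff]; exact dvd_sub hy.2 hy'.2
      have hdvd2 : (p:ℤ)^(k'+1) ∣ ((y:ℤ) - (y':ℤ)) * W := by
        have h1 : (p:ℤ) * (p:ℤ)^(k'+1) ∣ (p:ℤ) * (((y:ℤ) - (y':ℤ)) * W) := by
          calc (p:ℤ) * (p:ℤ)^(k'+1) = (p:ℤ)^(k'+2) := by ring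
          _ ∣ _ := hdvd1
        exact (mul_dvd_mul_iff_left hpz).mp h1
      have hWnd : ¬ (p:ℤ) ∣ W := by
        intro hWd
        apply hA
        have : e₁ = W - (p:ℤ) * ((p:ℤ)*a*((y:ℤ)^2+(y:ℤ)*(y':ℤ)+(y':ℤ)^2)
            + e₂*((y:ℤ)+(y':ℤ))) := by rw [hW]; ring
        rw [this]
        exact dvd_sub hWd (Dvd.intro _ rfl)
      have hcop : IsCoprime ((p:ℤ)^(k'+1)) W :=
        IsCoprime.pow_left (((Nat.prime_iff_prime_int.mp hp).coprime_iff_not_dvd).mpr hWnd)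
      have hdy : (p:ℤ)^(k'+1) ∣ (y:ℤ) - (y':ℤ) := hcop.dvd_of_dvd_mul_right hdvd2
      have hb1 : (y:ℤ) < (p:ℤ)^(k'+1) := by exact_mod_cast hy.1
      have hb2 : (y':ℤ) < (p:ℤ)^(k'+1) := by exact_mod_cast hy'.1
      have hy0 : (0:ℤ) ≤ (y:ℤ) := Int.natCast_nonneg y
      have hy0' : (0:ℤ) ≤ (y':ℤ) := Int.natCast_nonneg y'
      have hsub : |(y:ℤ) - (y':ℤ)| < (p:ℤ)^(k'+1) := by
        rw [abs_sub_lt_iff]; omega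
      have hz : (y:ℤ) - (y':ℤ) = 0 := by
        by_contra hne
        have habs : 0 < |(y:ℤ) - (y':ℤ)| := abs_pos.mpr hne
        have hle : (p:ℤ)^(k'+1) ≤ |(y:ℤ) - (y':ℤ)| :=
          Int.le_of_dvd habs ((dvd_abs _ _).mpr hdy)
        linarith
      have : (y:ℤ) = (y':ℤ) := by omega
      exact_mod_cast this
    calc S.card ^ 3 ≤ 1 := by
          have := Nat.pow_le_pow_left hcard 3; simpa using this
      _ ≤ 27^k' * g^2 := Nat.one_le_iff_ne_zero.mpr (by positivity)
  -- now p ∣ e₁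
  by_cases hB : (p:ℤ)^2 ∣ e₀
  on_goal 2 =>
    -- v(e₀) = 1 : no solutions
    have hempty : S = ∅ := by
      apply Finset.filter_eq_empty_iff.mpr
      intro y hy
      intro hdvd
      apply hB
      have h2 : (p:ℤ)^2 ∣ ev a b c d (ρ + p*(y:ℤ)) :=
        dvd_trans (pow_dvd_pow (p:ℤ) (by omega)) hdvd
      have h3 : (p:ℤ)^2 ∣ ev a b c d (ρ + p*(y:ℤ)) - e₀ := by
        have heq : ev a b c d (ρ + p*(y:ℤ)) - e₀
            = (p:ℤ)^2 * ((p:ℤ)*a*(y:ℤ)^3 + e₂*(y:ℤ)^2) + (p:ℤ)*e₁*(y:ℤ) := by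
          rw [hEV]; ring
        rw [heq]
        apply dvd_add (Dvd.intro _ rfl)
        obtain ⟨w, hw⟩ := hA
        rw [hw]
        calc (p:ℤ)^2 ∣ (p:ℤ)^2 * (w * y) := Dvd.intro _ rfl
          _ = (p:ℤ) * ((p:ℤ)*w) * (y:ℤ) := by ring
      have := dvd_sub h2 h3
      simpa using this
    rw [hempty]
    simp
  -- p ∣ e₁, p² ∣ e₀
  obtain ⟨C1, hC1⟩ := hA
  obtain ⟨D1, hD1⟩ := hB
  by_cases hC : (p:ℤ) ∣ e₂ ∧ (p:ℤ)^2 ∣ e₁ ∧ (p:ℤ)^3 ∣ e₀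
  on_goal 2 =>
    -- case m = 2
    have hEV2 : ∀ y : ℤ, ev a b c d (ρ + p*y)
        = (p:ℤ)^2 * ev ((p:ℤ)*a) e₂ C1 D1 y := by
      intro y; rw [hEV, hC1, hD1]; simp only [ev]; ring
    have hcont' : ¬((p:ℤ) ∣ (p:ℤ)*a ∧ (p:ℤ) ∣ e₂ ∧ (p:ℤ) ∣ C1 ∧ (p:ℤ) ∣ D1) := by
      rintro ⟨-, h2, h3, h4⟩
      apply hC
      refine ⟨h2, ?_, ?_⟩
      · rw [hC1, pow_two]; exact mul_dvd_mul_left _ h3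
      · rw [hD1, pow_succ]
        rw [mul_comm ((p:ℤ)^2) D1, mul_comm ((p:ℤ)^2) ((p:ℤ))]
        exact mul_dvd_mul h4 dvd_rfl
    -- discriminant relation
    have hDD : dsc a b c d = (p:ℤ)^2 * dsc ((p:ℤ)*a) e₂ C1 D1 := by
      have h6 : (p:ℤ)^6 * dsc a b c d
          = (p:ℤ)^6 * ((p:ℤ)^2 * dsc ((p:ℤ)*a) e₂ C1 D1) := by
        rw [← dsc_shift a b c d ρ (p:ℤ)]
        rw [← he₂, ← he₁, ← he₀, hC1, hD1]
        simp only [dsc]; ring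
      exact mul_left_cancel₀ (pow_ne_zero 6 hpz) h6
    have hNA : (dsc a b c d).natAbs = p^2 * (dsc ((p:ℤ)*a) e₂ C1 D1).natAbs := by
      rw [hDD, Int.natAbs_mul, Int.natAbs_pow, Int.natAbs_natCast]
    have hgf : g = p^2 * Nat.gcd (p^k') (dsc ((p:ℤ)*a) e₂ C1 D1).natAbs := by
      rw [hg, hNA]
      have : k' + 2 = 2 + k' := by omega
      rw [this, gcd_pow_mul]
    -- rewrite the filter condition
    have hSrw : S = (Finset.range (p^(k'+1))).filter
        (fun y : ℕ => (p:ℤ)^k' ∣ ev ((p:ℤ)*a) e₂ C1 D1 (y:ℤ)) := by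
      rw [hS]
      apply Finset.filter_congr
      intro y _
      rw [hEV2 (y:ℤ)]
      constructor
      · intro h
        have h1 : (p:ℤ)^2 * (p:ℤ)^k' ∣ (p:ℤ)^2 * ev ((p:ℤ)*a) e₂ C1 D1 (y:ℤ) := by
          calc (p:ℤ)^2 * (p:ℤ)^k' = (p:ℤ)^(k'+2) := by ring
            _ ∣ _ := h
        exact (mul_dvd_mul_iff_left (pow_ne_zero 2 hpz)).mp h1
      · intro h
        calc (p:ℤ)^(k'+2) = (p:ℤ)^2 * (p:ℤ)^k' := by ring
          _ ∣ (p:ℤ)^2 * ev ((p:ℤ)*a) e₂ C1 D1 (y:ℤ) := mul_dvd_mul_left _ h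
    rcases Nat.eq_zero_or_pos k' with hk0 | hk1
    · -- k' = 0 : crude bound
      subst hk0
      have hcard : S.card ≤ p := by
        calc S.card ≤ (Finset.range (p^1)).card := by
              rw [hS]; exact Finset.card_filter_le _ _
          _ = p := by rw [Finset.card_range, pow_one]
      have hgp : g = p^2 * Nat.gcd 1 (dsc ((p:ℤ)*a) e₂ C1 D1).natAbs := by
        simpa using hgf
      have hg2 : g = p^2 := by rw [hgp]; simp
      calc S.card^3 ≤ p^3 := Nat.pow_le_pow_left hcard 3
        _ ≤ p^4 := Nat.pow_le_pow_right hp0 (by omega)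
        _ = 27^0 * (p^2)^2 := by ring
        _ = 27^0 * g^2 := by rw [hg2]
    · -- k' ≥ 1 : recurse
      have hper : S.card = p * cntN p k' ((p:ℤ)*a) e₂ C1 D1 := by
        rw [hSrw]
        have hcast : ∀ y : ℕ, ((p:ℤ)^k' ∣ ev ((p:ℤ)*a) e₂ C1 D1 (y:ℤ))
            ↔ ((p:ℤ)^k' ∣ ev ((p:ℤ)*a) e₂ C1 D1 ((y % p^k' : ℕ):ℤ)) := by
          intro y
          have := dvd_ev_iff_mod (p^k') ((p:ℤ)*a) e₂ C1 D1 y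
          rw [Nat.cast_pow] at this
          exact this
        rw [Finset.filter_congr (fun y _ => hcast y)]
        have hrange : p^(k'+1) = p * p^k' := by ring
        rw [hrange]
        simp only [cntN]
        have hcp := count_period p (p^k') (Nat.pow_pos hp0)
          (fun z => (p:ℤ)^k' ∣ ev ((p:ℤ)*a) e₂ C1 D1 (z:ℤ))
        convert hcp using 2 <;> congr!
      have hIH := IH k' hk1 le_rfl ((p:ℤ)*a) e₂ C1 D1 hcont'
      set G' := Nat.gcd (p^k') (dsc ((p:ℤ)*a) e₂ C1 D1).natAbs with hG'
      calc S.card^3 = p^3 * (cntN p k' ((p:ℤ)*a) e₂ C1 D1)^3 := by rw [hper]; ring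
        _ ≤ p^3 * (27^k' * G'^2) := Nat.mul_le_mul_left _ hIH
        _ ≤ p^4 * (27^k' * G'^2) := Nat.mul_le_mul_right _
              (Nat.pow_le_pow_right hp0 (by omega))
        _ = 27^k' * (p^2 * G')^2 := by ring
        _ = 27^k' * g^2 := by rw [hgf]
  · -- case m = 3 : hC : p ∣ e₂ ∧ p² ∣ e₁ ∧ p³ ∣ e₀
    obtain ⟨⟨B2, hB2⟩, ⟨C2, hC2⟩, ⟨D2, hD2⟩⟩ := hC
    have hEV3 : ∀ y : ℤ, ev a b c d (ρ + p*y)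
        = (p:ℤ)^3 * ev a B2 C2 D2 y := by
      intro y; rw [hEV, hB2, hC2, hD2]; simp only [ev]; ring
    have hcont'' : ¬((p:ℤ) ∣ a ∧ (p:ℤ) ∣ B2 ∧ (p:ℤ) ∣ C2 ∧ (p:ℤ) ∣ D2) := by
      rintro ⟨h1, -, -, -⟩
      apply hcont
      have hpb : (p:ℤ) ∣ b := by
        have : b = e₂ - 3*a*ρ := by rw [he₂]; ring
        rw [this, hB2]
        exact dvd_sub (Dvd.intro _ rfl) (Dvd.dvd.mul_right (Dvd.dvd.mul_left h1 3) ρ)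
      have hpc : (p:ℤ) ∣ c := by
        have : c = e₁ - 3*a*ρ^2 - 2*b*ρ := by rw [he₁]; ring
        rw [this, hC2]
        refine dvd_sub (dvd_sub ?_ ?_) ?_
        · calc (p:ℤ) ∣ (p:ℤ)^2 := dvd_pow_self _ (by omega)
            _ ∣ (p:ℤ)^2 * C2 := Dvd.intro _ rfl
        · exact Dvd.dvd.mul_right (Dvd.dvd.mul_left h1 3) _
        · exact Dvd.dvd.mul_right (Dvd.dvd.mul_left hpb 2) ρ
      have hpd : (p:ℤ) ∣ d := by
        have : d = e₀ - a*ρ^3 - b*ρ^2 - c*ρ := by rw [he₀]; simp only [ev]; ring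
        rw [this, hD2]
        refine dvd_sub (dvd_sub (dvd_sub ?_ ?_) ?_) ?_
        · calc (p:ℤ) ∣ (p:ℤ)^3 := dvd_pow_self _ (by omega)
            _ ∣ (p:ℤ)^3 * D2 := Dvd.intro _ rfl
        · exact Dvd.dvd.mul_right h1 _
        · exact Dvd.dvd.mul_right hpb _
        · exact Dvd.dvd.mul_right hpc ρ
      exact ⟨h1, hpb, hpc, hpd⟩
    have hDD : dsc a b c d = (p:ℤ)^6 * dsc a B2 C2 D2 := by
      have h6 : (p:ℤ)^6 * dsc a b c d
          = (p:ℤ)^6 * ((p:ℤ)^6 * dsc a B2 C2 D2) := by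
        rw [← dsc_shift a b c d ρ (p:ℤ)]
        rw [← he₂, ← he₁, ← he₀, hB2, hC2, hD2]
        simp only [dsc]; ring
      exact mul_left_cancel₀ (pow_ne_zero 6 hpz) h6
    have hNA : (dsc a b c d).natAbs = p^6 * (dsc a B2 C2 D2).natAbs := by
      rw [hDD, Int.natAbs_mul, Int.natAbs_pow, Int.natAbs_natCast]
    rcases Nat.lt_or_ge k' 2 with hk01 | hk2
    · -- k' ∈ {0,1} : crude bound
      have hgfull : g = p^(k'+2) := by
        rw [hg, hNA]
        apply Nat.gcd_eq_left
        calc p^(k'+2) ∣ p^6 := pow_dvd_pow p (by omega)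
          _ ∣ p^6 * (dsc a B2 C2 D2).natAbs := Dvd.intro _ rfl
      have hcard : S.card ≤ p^(k'+1) := by
        calc S.card ≤ (Finset.range (p^(k'+1))).card := by
              rw [hS]; exact Finset.card_filter_le _ _
          _ = p^(k'+1) := Finset.card_range _
      calc S.card^3 ≤ (p^(k'+1))^3 := Nat.pow_le_pow_left hcard 3
        _ = p^(3*k'+3) := by ring
        _ ≤ p^(2*k'+4) := Nat.pow_le_pow_right hp0 (by omega)
        _ = (p^(k'+2))^2 := by ring
        _ ≤ 27^k' * (p^(k'+2))^2 := Nat.le_mul_of_pos_left _ (by positivity)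
        _ = 27^k' * g^2 := by rw [hgfull]
    · -- k' ≥ 2 : recurse with m = 3
      have hSrw3 : S = (Finset.range (p^(k'+1))).filter
          (fun y : ℕ => (p:ℤ)^(k'-1) ∣ ev a B2 C2 D2 (y:ℤ)) := by
        rw [hS]
        apply Finset.filter_congr
        intro y _
        rw [hEV3 (y:ℤ)]
        have hsplit : (p:ℤ)^(k'+2) = (p:ℤ)^3 * (p:ℤ)^(k'-1) := by
          rw [← pow_add]
          congr 1
          omega
        constructor
        · intro h
          rw [hsplit] at h
          exact (mul_dvd_mul_iff_left (pow_ne_zero 3 hpz)).mp h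
        · intro h
          rw [hsplit]
          exact mul_dvd_mul_left _ h
      have hper : S.card = p^2 * cntN p (k'-1) a B2 C2 D2 := by
        rw [hSrw3]
        have hcast : ∀ y : ℕ, ((p:ℤ)^(k'-1) ∣ ev a B2 C2 D2 (y:ℤ))
            ↔ ((p:ℤ)^(k'-1) ∣ ev a B2 C2 D2 ((y % p^(k'-1) : ℕ):ℤ)) := by
          intro y
          have := dvd_ev_iff_mod (p^(k'-1)) a B2 C2 D2 y
          rw [Nat.cast_pow] at this
          exact this
        rw [Finset.filter_congr (fun y _ => hcast y)]
        have hrange : p^(k'+1) = p^2 * p^(k'-1) := by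
          rw [← pow_add]; congr 1; omega
        rw [hrange]
        simp only [cntN]
        have hcp := count_period (p^2) (p^(k'-1)) (Nat.pow_pos hp0)
          (fun z => (p:ℤ)^(k'-1) ∣ ev a B2 C2 D2 (z:ℤ))
        convert hcp using 2 <;> congr!
      have hIH := IH (k'-1) (by omega) (by omega) a B2 C2 D2 hcont''
      set G1 := Nat.gcd (p^(k'-1)) (dsc a B2 C2 D2).natAbs with hG1
      -- key: p^6 * G1^2 ≤ g^2
      have hkey : p^6 * G1^2 ≤ g^2 := by
        rcases Nat.lt_or_ge k' 5 with hk4 | hk5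
        · -- k'+2 ≤ 6 : g = p^(k'+2)
          have hgfull : g = p^(k'+2) := by
            rw [hg, hNA]
            apply Nat.gcd_eq_left
            calc p^(k'+2) ∣ p^6 := pow_dvd_pow p (by omega)
              _ ∣ p^6 * (dsc a B2 C2 D2).natAbs := Dvd.intro _ rfl
          have hG1le : G1 ≤ p^(k'-1) :=
            Nat.le_of_dvd (Nat.pow_pos hp0) (Nat.gcd_dvd_left _ _)
          calc p^6 * G1^2 ≤ p^6 * (p^(k'-1))^2 :=
                Nat.mul_le_mul_left _ (Nat.pow_le_pow_left hG1le 2)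
            _ = p^(6 + (k'-1)*2) := by rw [← pow_mul, ← pow_add]
            _ ≤ p^((k'+2)*2) := Nat.pow_le_pow_right hp0 (by omega)
            _ = (p^(k'+2))^2 := by rw [← pow_mul]
            _ = g^2 := by rw [hgfull]
        · -- k' ≥ 5 : g = p^6 * gcd(p^(k'-4), n)
          set n := (dsc a B2 C2 D2).natAbs with hn
          have hgf6 : g = p^6 * Nat.gcd (p^(k'-4)) n := by
            rw [hg, hNA]
            have h : k' + 2 = 6 + (k'-4) := by omega
            rw [h, gcd_pow_mul]
          have hG1le : G1 ≤ p^3 * Nat.gcd (p^(k'-4)) n := by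
            have h : k' - 1 = 3 + (k'-4) := by omega
            rw [hG1, h]
            exact gcd_pow_le p 3 (k'-4) n hp0
          calc p^6 * G1^2 ≤ p^6 * (p^3 * Nat.gcd (p^(k'-4)) n)^2 :=
                Nat.mul_le_mul_left _ (Nat.pow_le_pow_left hG1le 2)
            _ = (p^6 * Nat.gcd (p^(k'-4)) n)^2 := by ring
            _ = g^2 := by rw [hgf6]
      calc S.card^3 = p^6 * (cntN p (k'-1) a B2 C2 D2)^3 := by rw [hper]; ring
        _ ≤ p^6 * (27^(k'-1) * G1^2) := Nat.mul_le_mul_left _ hIH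
        _ = 27^(k'-1) * (p^6 * G1^2) := by ring
        _ ≤ 27^(k'-1) * g^2 := Nat.mul_le_mul_left _ hkey
        _ ≤ 27^k' * g^2 := Nat.mul_le_mul_right _
              (Nat.pow_le_pow_right (by omega) (by omega))

theorem mainBound (p : ℕ) (hp : p.Prime) : ∀ k, 1 ≤ k → ∀ a b c d : ℤ,
    ¬((p:ℤ) ∣ a ∧ (p:ℤ) ∣ b ∧ (p:ℤ) ∣ c ∧ (p:ℤ) ∣ d) →
    (cntN p k a b c d)^3 ≤ 27^k * (Nat.gcd (p^k) (dsc a b c d).natAbs)^2 := by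
  intro k
  induction k using Nat.strong_induction_on with
  | _ k IH =>
    intro hk a b c d hcont
    have hp0 : 0 < p := hp.pos
    rcases Nat.lt_or_ge k 2 with hk1 | hk2
    · -- k = 1
      have hk1' : k = 1 := by omega
      subst hk1'
      have h3 : cntN p 1 a b c d ≤ 3 := by
        have h := card_roots_le_three hp a b c d hcont
        unfold cntN
        have hmod : ∀ x ∈ Finset.range (p^1),
            ((p:ℤ)^1 ∣ ev a b c d (x:ℤ)) ↔ ((p:ℤ) ∣ ev a b c d (x:ℤ)) := by
          intro x _; rw [pow_one]
        rw [Finset.filter_congr hmod, pow_one]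
        exact h
      calc (cntN p 1 a b c d)^3 ≤ 3^3 := Nat.pow_le_pow_left h3 3
        _ = 27^1 * 1 := by norm_num
        _ ≤ 27^1 * (Nat.gcd (p^1) (dsc a b c d).natAbs)^2 := by
            apply Nat.mul_le_mul_left
            have h1 : 0 < Nat.gcd (p^1) (dsc a b c d).natAbs :=
              Nat.gcd_pos_of_pos_left _ (Nat.pow_pos hp0)
            exact Nat.pow_pos h1
    · -- k ≥ 2
      obtain ⟨k', rfl⟩ : ∃ k', k = k'+2 := ⟨k-2, by omega⟩
      have hfib := cnt_fiber p hp0 (k'+1) a b c d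
      set R := (Finset.range p).filter (fun r : ℕ => (p:ℤ) ∣ ev a b c d (r:ℤ)) with hR
      have hRcard : R.card ≤ 3 := card_roots_le_three hp a b c d hcont
      set g := Nat.gcd (p^(k'+2)) (dsc a b c d).natAbs with hg
      set cfun : ℕ → ℕ := fun r => ((Finset.range (p^(k'+1))).filter
          (fun y : ℕ => (p:ℤ)^(k'+2) ∣ ev a b c d ((r:ℤ) + (p:ℤ)*(y:ℤ)))).card with hcfun
      have hfib2 : cntN p (k'+2) a b c d = ∑ r ∈ R, cfun r := hfib
      have hclass : ∀ r ∈ R, (cfun r)^3 ≤ 27^k' * g^2 := by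
        intro r hrR
        have hrd := (Finset.mem_filter.mp hrR).2
        exact classBound p hp k' a b c d hcont r hrd
          (fun j hj1 hj2 A B C D hc => IH j (by omega) hj1 A B C D hc)
      rcases Finset.eq_empty_or_nonempty R with hRe | hRne
      · rw [hfib2, hRe]
        simp
      · obtain ⟨r₀, hr₀R, hmax⟩ := Finset.exists_max_image R cfun hRne
        have hsum : cntN p (k'+2) a b c d ≤ 3 * cfun r₀ := by
          rw [hfib2]
          calc ∑ r ∈ R, cfun r ≤ R.card * cfun r₀ := by
                rw [← smul_eq_mul]
                exact Finset.sum_le_card_nsmul R cfun (cfun r₀) (fun r hr => hmax r hr)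
            _ ≤ 3 * cfun r₀ := Nat.mul_le_mul_right _ hRcard
        calc (cntN p (k'+2) a b c d)^3 ≤ (3 * cfun r₀)^3 := Nat.pow_le_pow_left hsum 3
          _ = 27 * (cfun r₀)^3 := by ring
          _ ≤ 27 * (27^k' * g^2) := Nat.mul_le_mul_left _ (hclass r₀ hr₀R)
          _ = 27^(k'+1) * g^2 := by ring
          _ ≤ 27^(k'+2) * g^2 := Nat.mul_le_mul_right _
                (Nat.pow_le_pow_right (by omega) (by omega))

lemma natCard_eq_cntN (p k : ℕ) (hpk : 0 < p^k) (a b c d : ℤ) :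
    Nat.card {x : ZMod (p^k) // (a : ZMod (p^k))*x^3 + (b : ZMod (p^k))*x^2
      + (c : ZMod (p^k))*x + (d : ZMod (p^k)) = 0} = cntN p k a b c d := by
  haveI : NeZero (p^k) := ⟨hpk.ne'⟩
  rw [Nat.card_eq_fintype_card, Fintype.card_subtype]
  unfold cntN
  have hcast : ∀ x : ZMod (p^k),
      ((ev a b c d ((x.val : ℕ):ℤ) : ℤ) : ZMod (p^k))
        = (a : ZMod (p^k))*x^3 + (b : ZMod (p^k))*x^2
          + (c : ZMod (p^k))*x + (d : ZMod (p^k)) := by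
    intro x
    have hxv : (((x.val : ℕ)) : ZMod (p^k)) = x := ZMod.natCast_rightInverse x
    simp only [ev]
    push_cast
    rw [hxv]
  have hdvd_iff : ∀ x : ZMod (p^k),
      ((a : ZMod (p^k))*x^3 + (b : ZMod (p^k))*x^2
        + (c : ZMod (p^k))*x + (d : ZMod (p^k)) = 0)
      ↔ ((p:ℤ)^k ∣ ev a b c d ((x.val : ℕ):ℤ)) := by
    intro x
    rw [← hcast x, ZMod.intCast_zmod_eq_zero_iff_dvd]
    push_cast
    rfl
  refine Finset.card_bij' (fun x _ => x.val) (fun y _ => (y : ZMod (p^k))) ?_ ?_ ?_ ?_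
  · intro x hx
    simp only [Finset.mem_filter, Finset.mem_univ, true_and] at hx
    simp only [Finset.mem_filter, Finset.mem_range]
    exact ⟨ZMod.val_lt x, (hdvd_iff x).mp hx⟩
  · intro y hy
    simp only [Finset.mem_filter, Finset.mem_range] at hy
    simp only [Finset.mem_filter, Finset.mem_univ, true_and]
    rw [hdvd_iff]
    have : ((y : ZMod (p^k)).val) = y := ZMod.val_natCast_of_lt hy.1
    rw [this]
    exact hy.2
  · intro x hx
    exact ZMod.natCast_rightInverse x
  · intro y hy
    simp only [Finset.mem_filter, Finset.mem_range] at hy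
    exact ZMod.val_natCast_of_lt hy.1

lemma three_pow_le (k : ℕ) (hk : 1 ≤ k) : 3^k ≤ 9 * (k+1)^(k-1) := by
  rcases Nat.lt_or_ge k 2 with h1 | h2
  · have : k = 1 := by omega
    subst this; norm_num
  · have hsplit : 3^k = 3 * 3^(k-1) := by
      rw [← pow_succ']
      congr 1
      omega
    have hle : 3^(k-1) ≤ (k+1)^(k-1) := Nat.pow_le_pow_left (by omega) _
    calc 3^k = 3 * 3^(k-1) := hsplit
      _ ≤ 3 * (k+1)^(k-1) := Nat.mul_le_mul_left _ hle
      _ ≤ 9 * (k+1)^(k-1) := Nat.mul_le_mul_right _ (by omega)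

end CubicAux

open CubicAux

/-- There is an absolute `C > 0` such that for every cubic `f ∈ ℤ[X]` and
prime `p` not dividing all coefficients of `f`, and every `k ≥ 1`:
`#{x ∈ ℤ/p^kℤ : f(x) ≡ 0 (mod p^k)} ≤ C (k+1)^{k−1} gcd(p^k, Disc(f))^{2/3}`, where
`Disc(aX³+bX²+cX+d) = b²c² − 4ac³ − 4b³d − 27a²d² + 18abcd`. -/
theorem cubic_roots_mod_prime_power_bound :
    ∃ C > (0:ℝ), ∀ f : Polynomial ℤ, f.natDegree = 3 →
      ∀ p : ℕ, p.Prime → ¬ (∀ i, (p : ℤ) ∣ f.coeff i) → ∀ k : ℕ, 1 ≤ k →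
        (Nat.card {x : ZMod (p ^ k) // Polynomial.aeval x f = 0} : ℝ)
          ≤ C * ((k : ℝ) + 1) ^ (k - 1) *
            ((Int.gcd ((p : ℤ) ^ k)
                (f.coeff 2 ^ 2 * f.coeff 1 ^ 2 - 4 * f.coeff 3 * f.coeff 1 ^ 3
                  - 4 * f.coeff 2 ^ 3 * f.coeff 0 - 27 * f.coeff 3 ^ 2 * f.coeff 0 ^ 2
                  + 18 * f.coeff 3 * f.coeff 2 * f.coeff 1 * f.coeff 0) : ℝ)) ^ ((2:ℝ)/3) := by
  refine ⟨9, by norm_num, ?_⟩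
  intro f hdeg p hp hndvd k hk
  have hp0 : 0 < p := hp.pos
  have hpk : 0 < p^k := Nat.pow_pos hp0
  set a : ℤ := f.coeff 3 with ha
  set b : ℤ := f.coeff 2 with hb
  set c : ℤ := f.coeff 1 with hc
  set d : ℤ := f.coeff 0 with hd
  have hcont : ¬((p:ℤ) ∣ a ∧ (p:ℤ) ∣ b ∧ (p:ℤ) ∣ c ∧ (p:ℤ) ∣ d) := by
    rintro ⟨h3, h2, h1, h0⟩
    apply hndvd
    intro i
    rcases Nat.lt_or_ge i 4 with hi | hi
    · interval_cases i
      · exact h0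
      · exact h1
      · exact h2
      · exact h3
    · have : f.coeff i = 0 := Polynomial.coeff_eq_zero_of_natDegree_lt (by omega)
      rw [this]
      exact dvd_zero _
  have hsubst : ∀ x : ZMod (p^k), Polynomial.aeval x f
      = (a : ZMod (p^k))*x^3 + (b : ZMod (p^k))*x^2
        + (c : ZMod (p^k))*x + (d : ZMod (p^k)) := by
    intro x
    rw [Polynomial.aeval_eq_sum_range, hdeg]
    rw [Finset.sum_range_succ, Finset.sum_range_succ, Finset.sum_range_succ,
      Finset.sum_range_one]
    simp only [zsmul_eq_mul, pow_zero, pow_one]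
    push_cast
    ring
  have hcard : Nat.card {x : ZMod (p^k) // Polynomial.aeval x f = 0}
      = cntN p k a b c d := by
    rw [Nat.card_congr (Equiv.subtypeEquivRight (fun x => by rw [hsubst x]))]
    exact natCard_eq_cntN p k hpk a b c d
  have hmain := mainBound p hp k hk a b c d hcont
  set g : ℕ := Nat.gcd (p^k) (dsc a b c d).natAbs with hg
  have hgInt : Int.gcd ((p:ℤ)^k)
      (b^2*c^2 - 4*a*c^3 - 4*b^3*d - 27*a^2*d^2 + 18*a*b*c*d) = g := by
    rw [hg]
    unfold Int.gcd
    congr 1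
  have hexpr : f.coeff 2 ^ 2 * f.coeff 1 ^ 2 - 4 * f.coeff 3 * f.coeff 1 ^ 3
      - 4 * f.coeff 2 ^ 3 * f.coeff 0 - 27 * f.coeff 3 ^ 2 * f.coeff 0 ^ 2
      + 18 * f.coeff 3 * f.coeff 2 * f.coeff 1 * f.coeff 0
      = b^2*c^2 - 4*a*c^3 - 4*b^3*d - 27*a^2*d^2 + 18*a*b*c*d := by
    ring
  rw [hcard, hexpr, hgInt]
  -- now pure real arithmetic
  have hg0 : (0:ℝ) ≤ (g:ℝ) := Nat.cast_nonneg g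
  have hgr0 : (0:ℝ) ≤ (g:ℝ) ^ ((2:ℝ)/3) := Real.rpow_nonneg hg0 _
  have hstep1 : (cntN p k a b c d : ℝ) ≤ 3^k * (g:ℝ) ^ ((2:ℝ)/3) := by
    have hcube : ((cntN p k a b c d : ℝ))^3 ≤ (3^k * (g:ℝ) ^ ((2:ℝ)/3))^3 := by
      have hR : ((3:ℝ)^k * (g:ℝ) ^ ((2:ℝ)/3))^3 = 27^k * (g:ℝ)^2 := by
        rw [mul_pow]
        congr 1
        · rw [← pow_mul, mul_comm k 3, pow_mul]
          norm_num
        · rw [← Real.rpow_natCast ((g:ℝ) ^ ((2:ℝ)/3)) 3, ← Real.rpow_mul hg0]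
          norm_num
      rw [hR]
      exact_mod_cast hmain
    exact le_of_pow_le_pow_left₀ (by norm_num) (by positivity) hcube
  have hstep2 : (3:ℝ)^k ≤ 9 * ((k:ℝ)+1)^(k-1) := by
    have := three_pow_le k hk
    have hcast : ((3^k : ℕ) : ℝ) ≤ ((9 * (k+1)^(k-1) : ℕ) : ℝ) := Nat.cast_le.mpr this
    push_cast at hcast
    exact hcast
  calc (cntN p k a b c d : ℝ) ≤ 3^k * (g:ℝ) ^ ((2:ℝ)/3) := hstep1
    _ ≤ (9 * ((k:ℝ)+1)^(k-1)) * (g:ℝ) ^ ((2:ℝ)/3) :=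
        mul_le_mul_of_nonneg_right hstep2 hgr0
    _ = 9 * ((k:ℝ)+1)^(k-1) * (g:ℝ) ^ ((2:ℝ)/3) := by ring

end
end

section
/- Let f = n₃X³ + n₂X² + n₁X + n₀ ∈ ℤ[X] with n₃ ≠ 0 be irreducible over ℚ, and let k = ℚ[X]/(f) be the cubic number field it generates. Then the discriminant of the number field k divides n₃²·Disc(f). -/
noncomputable section

open Polynomial NumberField in
private lemma discr_calc_aux (k : Type) [Field k] [NumberField k] (θ : k) (a₀ a₁ a₂ : ℚ)
    (b : Module.Basis (Fin 3) ℚ k) (hb : ∀ i : Fin 3, b i = θ ^ (i : ℕ))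
    (h3 : θ ^ 3 + algebraMap ℚ k a₂ * θ ^ 2 + algebraMap ℚ k a₁ * θ + algebraMap ℚ k a₀ = 0) :
    Algebra.discr ℚ b =
      a₁^2*a₂^2 - 4*a₁^3 - 4*a₀*a₂^3 - 27*a₀^2 + 18*a₀*a₁*a₂ := by
  classical
  set M : Matrix (Fin 3) (Fin 3) ℚ := !![0,0,-a₀; 1,0,-a₁; 0,1,-a₂] with hMdef
  have hb0 : b 0 = 1 := by rw [hb]; norm_num
  have hb1 : b 1 = θ := by rw [hb]; norm_num
  have hb2 : b 2 = θ ^ 2 := by rw [hb]; norm_num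
  have hcube : θ ^ 3 = (-a₀) • b 0 + (-a₁) • b 1 + (-a₂) • b 2 := by
    rw [hb0, hb1, hb2]
    simp only [Algebra.smul_def, map_neg]
    linear_combination h3
  have hM : Algebra.leftMulMatrix b θ = M := by
    ext i j
    rw [Algebra.leftMulMatrix_eq_repr_mul]
    fin_cases j <;>
      simp only [Fin.zero_eta, Fin.mk_one, Fin.reduceFinMk, Fin.isValue]
    · have h : θ * b 0 = b 1 := by rw [hb0, hb1]; ring
      rw [h, b.repr_self]
      fin_cases i <;> simp [hMdef, Finsupp.single_apply]
    · have h : θ * b 1 = b 2 := by rw [hb1, hb2]; ring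
      rw [h, b.repr_self]
      fin_cases i <;> simp [hMdef, Finsupp.single_apply]
    · have h : θ * b 2 = (-a₀) • b 0 + (-a₁) • b 1 + (-a₂) • b 2 := by
        rw [← hcube, hb2]; ring
      rw [h, map_add, map_add, map_smul, map_smul, map_smul, b.repr_self, b.repr_self, b.repr_self]
      fin_cases i <;> simp [hMdef, Finsupp.single_apply]
  have ht : ∀ m : ℕ, Algebra.trace ℚ k (θ ^ m) = Matrix.trace (M ^ m) := by
    intro m
    rw [Algebra.trace_eq_matrix_trace b, map_pow, hM]
  have hM2 : M ^ 2 = M * M := sq M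
  have hM3 : M ^ 3 = M ^ 2 * M := pow_succ M 2
  have hM4 : M ^ 4 = M ^ 3 * M := pow_succ M 3
  have t1 : Matrix.trace M = -a₂ := by
    simp [hMdef, Matrix.trace_fin_three]
  have t2 : Matrix.trace (M ^ 2) = a₂ ^ 2 - 2 * a₁ := by
    rw [hM2, hMdef, Matrix.mul_fin_three, Matrix.trace_fin_three_of]; ring
  have t3 : Matrix.trace (M ^ 3) = -(a₂ ^ 3) + 3 * a₁ * a₂ - 3 * a₀ := by
    rw [hM3, hM2, hMdef, Matrix.mul_fin_three, Matrix.mul_fin_three, Matrix.trace_fin_three_of]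
    ring
  have t4 : Matrix.trace (M ^ 4) = a₂ ^ 4 - 4 * a₁ * a₂ ^ 2 + 4 * a₀ * a₂ + 2 * a₁ ^ 2 := by
    rw [hM4, hM3, hM2, hMdef, Matrix.mul_fin_three, Matrix.mul_fin_three, Matrix.mul_fin_three,
      Matrix.trace_fin_three_of]
    ring
  have hent : ∀ i j : Fin 3, Algebra.traceMatrix ℚ b i j
      = Matrix.trace (M ^ ((i : ℕ) + (j : ℕ))) := by
    intro i j
    rw [Algebra.traceMatrix_apply, Algebra.traceForm_apply, hb, hb, ← pow_add, ht]
  rw [Algebra.discr_def, Matrix.det_fin_three]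
  simp only [hent]
  norm_num
  rw [t1, t2, t3, t4]
  ring

open Polynomial NumberField in
private lemma discr_dvd_aux (k : Type) [Field k] [NumberField k] (θ : k) (hint : IsIntegral ℤ θ)
    (b : Module.Basis (Fin 3) ℚ k) (hb : ∀ i : Fin 3, b i = θ ^ (i : ℕ))
    (N : ℤ) (hdisc : Algebra.discr ℚ b = (N : ℚ)) :
    NumberField.discr k ∣ N := by
  classical
  set bI := (integralBasis k).reindex ((integralBasis k).indexEquiv b) with hbI
  set P := bI.toMatrix b with hP
  have hq : Algebra.discr ℚ b = P.det ^ 2 * Algebra.discr ℚ bI := by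
    conv_lhs => rw [← bI.toMatrix_map_vecMul b]
    rw [Algebra.discr_of_matrix_vecMul]
  have hbIdiscr : Algebra.discr ℚ bI = (NumberField.discr k : ℚ) := by
    rw [hbI, Module.Basis.coe_reindex, Algebra.discr_reindex, coe_discr]
  have hPint : ∀ i j, IsIntegral ℤ (P i j) := by
    intro i j
    have hθj : IsIntegral ℤ (b j) := by
      rw [hb]; exact hint.pow _
    obtain ⟨y, hy⟩ := IsIntegralClosure.isIntegral_iff (A := 𝓞 k).1 hθj
    rw [hP, Module.Basis.toMatrix_apply, hbI, Module.Basis.repr_reindex_apply, ← hy,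
      integralBasis_repr_apply]
    exact isIntegral_algebraMap
  have hPdet : IsIntegral ℤ P.det := IsIntegral.det hPint
  obtain ⟨d, hd⟩ := IsIntegrallyClosed.isIntegral_iff.1 hPdet
  refine ⟨d ^ 2, ?_⟩
  have : (N : ℚ) = ((NumberField.discr k * d ^ 2 : ℤ) : ℚ) := by
    rw [← hdisc, hq, hbIdiscr, ← hd]
    push_cast [eq_intCast]
    ring
  exact_mod_cast this

/-- Let `f = n₃X³ + n₂X² + n₁X + n₀ ∈ ℤ[X]` with `n₃ ≠ 0` be irreducible
over `ℚ`, and let `k` be the cubic number field it generates (a number field of degree `3`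
containing a root of `f`).  Then the discriminant of `k` divides `n₃² · Disc(f)`. -/
theorem field_discr_dvd_cubic_disc (n₀ n₁ n₂ n₃ : ℤ) (hn₃ : n₃ ≠ 0)
    (hirr : Irreducible
      (Polynomial.C (n₃ : ℚ) * Polynomial.X ^ 3 + Polynomial.C (n₂ : ℚ) * Polynomial.X ^ 2
        + Polynomial.C (n₁ : ℚ) * Polynomial.X + Polynomial.C (n₀ : ℚ)))
    (k : Type) [Field k] [NumberField k] (r : k)
    (hr : Polynomial.aeval r
      (Polynomial.C (n₃ : ℚ) * Polynomial.X ^ 3 + Polynomial.C (n₂ : ℚ) * Polynomial.X ^ 2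
        + Polynomial.C (n₁ : ℚ) * Polynomial.X + Polynomial.C (n₀ : ℚ)) = 0)
    (hdeg : Module.finrank ℚ k = 3) :
    (NumberField.discr k) ∣
      n₃ ^ 2 * (n₁ ^ 2 * n₂ ^ 2 - 4 * n₁ ^ 3 * n₃ - 4 * n₀ * n₂ ^ 3 - 27 * n₀ ^ 2 * n₃ ^ 2
        + 18 * n₀ * n₁ * n₂ * n₃) := by
  classical
  set f : Polynomial ℚ := Polynomial.C (n₃ : ℚ) * Polynomial.X ^ 3
      + Polynomial.C (n₂ : ℚ) * Polynomial.X ^ 2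
      + Polynomial.C (n₁ : ℚ) * Polynomial.X + Polynomial.C (n₀ : ℚ) with hf
  set α : ℚ →+* k := algebraMap ℚ k with hα
  have hr' : α (n₃:ℚ) * r ^ 3 + α (n₂:ℚ) * r ^ 2 + α (n₁:ℚ) * r + α (n₀:ℚ) = 0 := by
    simpa [hf, map_add, map_mul, map_pow] using hr
  set θ : k := α (n₃:ℚ) * r with hθ
  -- the cubic relation satisfied by θ
  have h3 : θ ^ 3 + α ((n₂:ℚ)) * θ ^ 2 + α ((n₁:ℚ) * (n₃:ℚ)) * θ
      + α ((n₀:ℚ) * (n₃:ℚ) ^ 2) = 0 := by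
    simp only [hθ, map_mul, map_pow]
    linear_combination (α (n₃:ℚ))^2 * hr'
  -- θ is integral over ℤ
  have hint : IsIntegral ℤ θ := by
    refine ⟨Polynomial.X ^ 3 + (Polynomial.C n₂ * Polynomial.X ^ 2
      + Polynomial.C (n₁ * n₃) * Polynomial.X + Polynomial.C (n₀ * n₃ ^ 2)), ?_, ?_⟩
    · exact Polynomial.monic_X_pow_add
        (lt_of_le_of_lt (Polynomial.degree_quadratic_le) (by norm_num))
    · have h3' : θ ^ 3 + (n₂:k) * θ ^ 2 + (n₁:k) * (n₃:k) * θ + (n₀:k) * (n₃:k) ^ 2 = 0 := by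
        simpa only [map_mul, map_pow, map_intCast] using h3
      rw [← Polynomial.aeval_def]
      simp only [map_add, map_mul, map_pow, Polynomial.aeval_X, Polynomial.aeval_C,
        algebraMap_int_eq, eq_intCast, map_intCast]
      linear_combination h3'
  -- degree of the minimal polynomial of r
  have hfd : f.natDegree = 3 := by
    rw [hf]; exact Polynomial.natDegree_cubic (by exact_mod_cast hn₃)
  have hmr : (minpoly ℚ r).natDegree = 3 := by
    rw [← minpoly.eq_of_irreducible hirr hr]
    rw [Polynomial.natDegree_mul hirr.ne_zero (by
      simp only [ne_eq, Polynomial.C_eq_zero, inv_eq_zero, Polynomial.leadingCoeff_eq_zero]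
      exact hirr.ne_zero)]
    simp [hfd]
  -- powers of θ form a basis
  have hlir : LinearIndependent ℚ fun i : Fin 3 => r ^ (i : ℕ) := by
    have := linearIndependent_pow (K := ℚ) (S := k) r
    rwa [hmr] at this
  have hliθ : LinearIndependent ℚ fun i : Fin 3 => θ ^ (i : ℕ) := by
    have h := hlir.units_smul fun i : Fin 3 => (Units.mk0 ((n₃:ℚ) ^ (i:ℕ))
      (by positivity))
    convert h using 1
    funext i
    simp [hθ, Units.smul_def, Algebra.smul_def, mul_pow, map_pow, hα]
  set b : Module.Basis (Fin 3) ℚ k := basisOfLinearIndependentOfCardEqFinrank hliθ (by simp [hdeg])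
    with hbdef
  have hb : ∀ i : Fin 3, b i = θ ^ (i : ℕ) := by
    intro i
    rw [hbdef, coe_basisOfLinearIndependentOfCardEqFinrank]
  -- compute the discriminant of this basis
  have hdisc : Algebra.discr ℚ b =
      ((n₃ ^ 2 * (n₁ ^ 2 * n₂ ^ 2 - 4 * n₁ ^ 3 * n₃ - 4 * n₀ * n₂ ^ 3 - 27 * n₀ ^ 2 * n₃ ^ 2
        + 18 * n₀ * n₁ * n₂ * n₃) : ℤ) : ℚ) := by
    rw [discr_calc_aux k θ ((n₀:ℚ) * (n₃:ℚ) ^ 2) ((n₁:ℚ) * (n₃:ℚ)) ((n₂:ℚ)) b hb h3]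
    push_cast
    ring
  exact discr_dvd_aux k θ hint b hb _ hdisc

end
end
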